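/- arXiv:1810.01518 — 9 statements merged into one kernel-verified Lean document; each statement's English description precedes it below -/
import Mathlib

section
/- There exists a strictly increasing sequence s : ℕ → ℕ+ such that for all finite nonempty subsets A, B of ℕ with max A < min B, the sum ∑_{n∈A} s n divides ∑_{n∈B} s n. -/
private def bds : ℕ → ℕ
  | 0 => 1
  | n + 1 => 2 * Nat.factorial (∑ k ∈ (Finset.range (n + 1)).attach, bds k.1)
decreasing_by exact Finset.mem_range.mp k.2

private lemma bds_succ (n : ℕ) :
    bds (n + 1) = 2 * Nat.factorial (∑ k ∈ Finset.range (n + 1), bds k) := by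
  rw [bds, ← Finset.sum_attach (Finset.range (n + 1)) (fun k => bds k)]

private lemma bds_pos (n : ℕ) : 0 < bds n := by
  cases n with
  | zero => simp [bds]
  | succ m =>
    rw [bds_succ]
    positivity

private lemma bds_lt_succ (n : ℕ) : bds n < bds (n + 1) := by
  rw [bds_succ]
  have h1 : bds n ≤ ∑ k ∈ Finset.range (n + 1), bds k :=
    Finset.single_le_sum (f := fun k => bds k) (fun i _ => Nat.zero_le _)
      (Finset.self_mem_range_succ n)
  calc bds n ≤ ∑ k ∈ Finset.range (n + 1), bds k := h1
    _ ≤ Nat.factorial (∑ k ∈ Finset.range (n + 1), bds k) := Nat.self_le_factorial _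
    _ < 2 * Nat.factorial (∑ k ∈ Finset.range (n + 1), bds k) := by
        have := Nat.factorial_pos (∑ k ∈ Finset.range (n + 1), bds k)
        omega

private lemma bds_dvd {A : Finset ℕ} (hA : A.Nonempty) {n : ℕ}
    (h : ∀ a ∈ A, a < n) : (∑ k ∈ A, bds k) ∣ bds n := by
  obtain ⟨m, rfl⟩ : ∃ m, n = m + 1 := by
    obtain ⟨a, ha⟩ := hA
    have := h a ha
    exact ⟨n - 1, by omega⟩
  rw [bds_succ]
  have hsub : A ⊆ Finset.range (m + 1) := fun a ha => Finset.mem_range.mpr (h a ha)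
  have hle : (∑ k ∈ A, bds k) ≤ ∑ k ∈ Finset.range (m + 1), bds k :=
    Finset.sum_le_sum_of_subset hsub
  have hpos : 0 < ∑ k ∈ A, bds k := by
    obtain ⟨a, ha⟩ := hA
    exact lt_of_lt_of_le (bds_pos a) (Finset.single_le_sum (fun i _ => Nat.zero_le _) ha)
  exact Dvd.dvd.mul_left (Nat.dvd_factorial hpos hle) 2

/-- There exists a strictly increasing sequence `s : ℕ → ℕ+` such that for all finite
nonempty subsets `A, B` of `ℕ` with `max A < min B`, `∑_{n∈A} s n` divides `∑_{n∈B} s n`. -/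
theorem exists_block_divisible_sequence :
    ∃ s : ℕ → ℕ+, StrictMono s ∧
      ∀ (A B : Finset ℕ) (hA : A.Nonempty) (hB : B.Nonempty),
        A.max' hA < B.min' hB →
        (∑ n ∈ A, (s n : ℕ)) ∣ (∑ n ∈ B, (s n : ℕ)) := by
  refine ⟨fun n => ⟨bds n, bds_pos n⟩, ?_, ?_⟩
  · apply strictMono_nat_of_lt_succ
    intro n
    exact_mod_cast bds_lt_succ n
  · intro A B hA hB hlt
    simp only [PNat.mk_coe]
    apply Finset.dvd_sum
    intro n hn
    apply bds_dvd hA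
    intro a ha
    calc a ≤ A.max' hA := Finset.le_max' A a ha
      _ < B.min' hB := hlt
      _ ≤ n := Finset.min'_le B n hn
end

section
/- The sequence defined by s 0 = 1 and s (n+1) = ∏ over nonempty subsets A of {0,...,n} of s_A, is block-divisible: for finite nonempty A, B ⊆ ℕ with max A < min B, s_A divides s_B. -/
/-- The sequence defined by `s 0 = 1` and
`s (n+1) = ∏_{∅ ≠ A ⊆ {0,…,n}} (∑_{m∈A} s m)` is block-divisible:
for finite nonempty `A, B ⊆ ℕ` with `max A < min B`, `s_A ∣ s_B`. -/
theorem recursive_sequence_block_divisible (s : ℕ → ℕ)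
    (h0 : s 0 = 1)
    (hrec : ∀ n : ℕ,
      s (n + 1) =
        ∏ A ∈ (Finset.range (n + 1)).powerset.filter (fun A => A.Nonempty),
          ∑ m ∈ A, s m) :
    ∀ (A B : Finset ℕ) (hA : A.Nonempty) (hB : B.Nonempty),
      A.max' hA < B.min' hB →
      (∑ n ∈ A, s n) ∣ (∑ n ∈ B, s n) := by
  intro A B hA hB hlt
  refine Finset.dvd_sum (fun n hn => ?_)
  have hn1 : A.max' hA < n := lt_of_lt_of_le hlt (B.min'_le n hn)
  obtain ⟨m, rfl⟩ : ∃ m, n = m + 1 :=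
    ⟨n - 1, (Nat.succ_pred_eq_of_pos (Nat.pos_of_ne_zero (by omega))).symm⟩
  rw [hrec m]
  refine Finset.dvd_prod_of_mem _ ?_
  simp only [Finset.mem_filter, Finset.mem_powerset]
  refine ⟨fun a ha => Finset.mem_range.2 ?_, hA⟩
  exact lt_of_le_of_lt (A.le_max' a ha) hn1
end

section
/- Let A be a multiplicative subgroup of the positive rationals ℚ₊ of finite index, and let A* := A ∩ ℤ₊ be the set of positive integers in A. Then the set {a ∈ ℤ₊ : a ∈ A* and a + 1 ∈ A*} is an IP-set, i.e., there exists a sequence (aᵢ) of positive integers such that every finite sum ∑_{i∈I} aᵢ over a nonempty finite index set I lies in A* ∩ (A* − 1). -/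
/-- The multiplicative group of positive rationals, as a subgroup of `ℚˣ`. -/
def posRat : Subgroup ℚˣ where
  carrier := {x | 0 < (x : ℚ)}
  one_mem' := by norm_num
  mul_mem' := by
    intro a b ha hb
    simp only [Set.mem_setOf_eq, Units.val_mul] at *
    exact mul_pos ha hb
  inv_mem' := by
    intro x hx
    simp only [Set.mem_setOf_eq] at *
    rw [Units.val_inv_eq_inv_val]
    exact inv_pos.mpr hx

/-- `A* = A ∩ ℤ₊`: the set of positive integers lying in `A`. -/
def posIntSet (A : Subgroup ↥posRat) : Set ℕ :=
  {n | 0 < n ∧ ∃ x ∈ A, ((x : ℚˣ) : ℚ) = (n : ℚ)}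

def toPos (n : ℕ+) : ↥posRat :=
  ⟨Units.mk0 (n : ℚ) (by exact_mod_cast n.ne_zero), by
    show (0:ℚ) < ((Units.mk0 (n : ℚ) _ : ℚˣ) : ℚ)
    rw [Units.val_mk0]
    exact_mod_cast n.pos⟩

lemma toPos_mul (m n : ℕ+) : toPos (m * n) = toPos m * toPos n := by
  apply Subtype.ext
  apply Units.ext
  show ((m * n : ℕ+) : ℚ) = (m : ℚ) * (n : ℚ)
  push_cast
  ring

lemma toPos_val (n : ℕ+) : ((toPos n : ℚˣ) : ℚ) = ((n : ℕ) : ℚ) := by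
  show ((n : ℕ+) : ℚ) = _
  norm_cast

open Hindman in
/-- `rs b i d` is the sum `b i + b (i+1) + ... + b (i+d)`. -/
def rs (b : Stream' ℕ+) : ℕ → ℕ → ℕ+
  | i, 0 => b.get i
  | i, d+1 => b.get i + rs b (i+1) d

lemma rs_mem (b : Stream' ℕ+) (i d : ℕ) : rs b i d ∈ Hindman.FS (b.drop i) := by
  induction d generalizing i with
  | zero =>
    have := Hindman.FS.head (b.drop i)
    rwa [Stream'.head_drop] at this
  | succ d ih =>
    have h := ih (i+1)
    rw [← Stream'.tail_drop'] at h
    have := Hindman.FS.cons (b.drop i) _ h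
    rwa [Stream'.head_drop] at this

lemma FS_drop_mono (b : Stream' ℕ+) {i j : ℕ} (h : i ≤ j) :
    Hindman.FS (b.drop j) ⊆ Hindman.FS (b.drop i) := by
  have := Hindman.FS_iter_tail_sub_FS (b.drop i) (j - i)
  rwa [Stream'.drop_drop, Nat.add_sub_of_le h] at this

lemma rs_add_mem (b : Stream' ℕ+) {j : ℕ} (i d : ℕ) (hd : i + d < j) {m : ℕ+}
    (hm : m ∈ Hindman.FS (b.drop j)) : rs b i d + m ∈ Hindman.FS (b.drop i) := by
  induction d generalizing i m with
  | zero =>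
    have hm' : m ∈ Hindman.FS ((b.drop i).tail) := by
      rw [Stream'.tail_drop']
      exact FS_drop_mono b (by omega) hm
    have := Hindman.FS.cons (b.drop i) m hm'
    rwa [Stream'.head_drop] at this
  | succ d ih =>
    have h1 : rs b (i+1) d + m ∈ Hindman.FS (b.drop (i+1)) := ih (i+1) (by omega) hm
    rw [← Stream'.tail_drop'] at h1
    have := Hindman.FS.cons (b.drop i) _ h1
    rw [Stream'.head_drop] at this
    show rs b i (d+1) + m ∈ _
    rw [show rs b i (d+1) = b.get i + rs b (i+1) d from rfl, add_assoc]
    exact this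

/-- partial sums of the nat values of the stream. -/
def P (b : Stream' ℕ+) (m : ℕ) : ℕ := ∑ l ∈ Finset.range m, (b.get l : ℕ)

lemma rs_coe (b : Stream' ℕ+) (i d : ℕ) : (rs b i d : ℕ) + P b i = P b (i + d + 1) := by
  induction d generalizing i with
  | zero =>
    show ((b.get i : ℕ)) + P b i = P b (i + 1)
    rw [P, P, Finset.sum_range_succ]
    ring
  | succ d ih =>
    have h1 := ih (i+1)
    have h2 : P b (i+1) = P b i + (b.get i : ℕ) := by rw [P, P, Finset.sum_range_succ]
    have h3 : ((rs b i (d+1) : ℕ+) : ℕ) = (b.get i : ℕ) + (rs b (i+1) d : ℕ) := by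
      rw [show rs b i (d+1) = b.get i + rs b (i+1) d from rfl, PNat.add_coe]
    have h4 : i + 1 + d + 1 = i + (d+1) + 1 := by omega
    rw [h4] at h1
    omega

lemma exists_run (b : Stream' ℕ+) (p : ℕ) :
    ∃ ud : ℕ × ℕ, p ≤ ud.1 ∧ ((b.get 0 : ℕ)) ∣ (rs b ud.1 ud.2 : ℕ) := by
  set t := (b.get 0 : ℕ) with ht
  have ht0 : 0 < t := (b.get 0).pos
  have maps : ∀ m ∈ Finset.Icc p (p+t), P b m % t ∈ Finset.range t := fun m _ =>
    Finset.mem_range.mpr (Nat.mod_lt _ ht0)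
  have card : (Finset.range t).card < (Finset.Icc p (p+t)).card := by
    rw [Finset.card_range, Nat.card_Icc]
    omega
  obtain ⟨u, hu, v, hv, huv, he⟩ := Finset.exists_ne_map_eq_of_card_lt_of_maps_to card maps
  rw [Finset.mem_Icc] at hu hv
  -- wlog u < v
  rcases Nat.lt_or_ge u v with hlt | hge
  case _ =>
    refine ⟨(u, v - u - 1), hu.1, ?_⟩
    have hc := rs_coe b u (v - u - 1)
    have hv' : u + (v - u - 1) + 1 = v := by omega
    rw [hv'] at hc
    have hmod : P b u ≡ P b v [MOD t] := he
    have := (Nat.modEq_iff_dvd' (by omega)).mp hmod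
    have : t ∣ P b v - P b u := this
    have hrs : P b v - P b u = (rs b u (v - u - 1) : ℕ) := by omega
    rwa [hrs] at this
  case _ =>
    have hlt : v < u := lt_of_le_of_ne hge (Ne.symm huv)
    refine ⟨(v, u - v - 1), hv.1, ?_⟩
    have hc := rs_coe b v (u - v - 1)
    have hv' : v + (u - v - 1) + 1 = u := by omega
    rw [hv'] at hc
    have hmod : P b v ≡ P b u [MOD t] := he.symm
    have := (Nat.modEq_iff_dvd' (by omega)).mp hmod
    have hrs : P b u - P b v = (rs b v (u - v - 1) : ℕ) := by omega
    rwa [hrs] at this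

noncomputable def runs (b : Stream' ℕ+) : ℕ → ℕ × ℕ
  | 0 => (exists_run b 1).choose
  | k+1 => (exists_run b ((runs b k).1 + (runs b k).2 + 1)).choose

lemma runs_zero (b : Stream' ℕ+) : 1 ≤ (runs b 0).1 := (exists_run b 1).choose_spec.1

lemma runs_succ (b : Stream' ℕ+) (k : ℕ) :
    (runs b k).1 + (runs b k).2 + 1 ≤ (runs b (k+1)).1 :=
  (exists_run b ((runs b k).1 + (runs b k).2 + 1)).choose_spec.1

lemma runs_dvd (b : Stream' ℕ+) (k : ℕ) :
    ((b.get 0 : ℕ)) ∣ (rs b (runs b k).1 (runs b k).2 : ℕ) := by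
  cases k with
  | zero => exact (exists_run b 1).choose_spec.2
  | succ k => exact (exists_run b ((runs b k).1 + (runs b k).2 + 1)).choose_spec.2

lemma runs_one_le (b : Stream' ℕ+) (k : ℕ) : 1 ≤ (runs b k).1 := by
  induction k with
  | zero => exact runs_zero b
  | succ k ih => have := runs_succ b k; omega

lemma runs_mono (b : Stream' ℕ+) {k k' : ℕ} (h : k < k') :
    (runs b k).1 + (runs b k).2 + 1 ≤ (runs b k').1 := by
  induction k' with
  | zero => omega
  | succ k' ih =>
    have h2 := runs_succ b k'
    rcases Nat.lt_or_ge k k' with h3 | h3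
    · have := ih h3; omega
    · have : k = k' := by omega
      subst this; omega

lemma sum_runs_mem (b : Stream' ℕ+) : ∀ (J : Finset ℕ) (hJ : J.Nonempty),
    ∃ x ∈ Hindman.FS (b.drop ((runs b (J.min' hJ)).1)),
      (x : ℕ) = ∑ k ∈ J, (rs b (runs b k).1 (runs b k).2 : ℕ) := by
  intro J
  induction J using Finset.strongInduction with
  | _ J ih =>
    intro hJ
    set k₀ := J.min' hJ with hk₀
    rcases (J.erase k₀).eq_empty_or_nonempty with he | hne
    · have hJe : J = {k₀} := by
        apply Finset.eq_singleton_iff_unique_mem.mpr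
        refine ⟨J.min'_mem hJ, fun y hy => ?_⟩
        by_contra hne'
        exact (Finset.ne_empty_of_mem (Finset.mem_erase.mpr ⟨hne', hy⟩)) he
      refine ⟨rs b (runs b k₀).1 (runs b k₀).2, rs_mem b _ _, ?_⟩
      rw [hJe, Finset.sum_singleton]
    · obtain ⟨x', hx', hsum'⟩ := ih (J.erase k₀) (Finset.erase_ssubset (J.min'_mem hJ)) hne
      set k₁ := (J.erase k₀).min' hne with hk₁
      have hk₁J : k₁ ∈ J.erase k₀ := Finset.min'_mem _ _
      have hk₀k₁ : k₀ < k₁ := by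
        rw [Finset.mem_erase] at hk₁J
        exact lt_of_le_of_ne (J.min'_le k₁ hk₁J.2) (Ne.symm hk₁J.1)
      have hgap := runs_mono b hk₀k₁
      refine ⟨rs b (runs b k₀).1 (runs b k₀).2 + x',
        rs_add_mem b _ _ (by omega) hx', ?_⟩
      rw [PNat.add_coe, hsum', ← Finset.add_sum_erase J _ (J.min'_mem hJ)]

/-- If `A ≤ ℚ₊` is a multiplicative subgroup of finite index, then
`A* ∩ (A* − 1)` is an IP-set: there is a sequence of positive integers all of whose
finite nonempty subset sums `m` satisfy `m ∈ A*` and `m + 1 ∈ A*`. -/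
theorem hildebrand_generalization (A : Subgroup ↥posRat) (hA : A.FiniteIndex) :
    ∃ a : ℕ → ℕ, (∀ i, 0 < a i) ∧
      ∀ I : Finset ℕ, I.Nonempty →
        (∑ i ∈ I, a i) ∈ posIntSet A ∧ (∑ i ∈ I, a i) + 1 ∈ posIntSet A := by
  classical
  haveI := hA
  haveI : Finite (↥posRat ⧸ A) := A.finite_quotient_of_finiteIndex
  set φ : ℕ+ → ↥posRat ⧸ A := fun n => QuotientGroup.mk (toPos n) with hφdef
  have φ_mul : ∀ m n : ℕ+, φ (m * n) = φ m * φ n := by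
    intro m n
    show QuotientGroup.mk (toPos (m * n)) = _
    rw [toPos_mul, QuotientGroup.mk_mul]
  have mem_iff : ∀ n : ℕ+, φ n = 1 ↔ toPos n ∈ A := fun n => QuotientGroup.eq_one_iff _
  have mem_posIntSet_of : ∀ n : ℕ+, φ n = 1 → (n : ℕ) ∈ posIntSet A := by
    intro n h
    exact ⟨n.pos, toPos n, (mem_iff n).mp h, toPos_val n⟩
  obtain ⟨c, hc, b, hb⟩ := Hindman.exists_FS_of_finite_cover
      ((fun γ : ↥posRat ⧸ A => φ ⁻¹' {γ}) '' Set.univ)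
      (Set.finite_univ.image _)
      (by intro n _; exact Set.mem_sUnion.mpr ⟨φ ⁻¹' {φ n}, ⟨φ n, trivial, rfl⟩, rfl⟩)
  obtain ⟨γ, -, rfl⟩ := hc
  have hφFS : ∀ x ∈ Hindman.FS b, φ x = γ := fun x hx => hb hx
  set t : ℕ := (b.get 0 : ℕ) with htdef
  have ht0 : 0 < t := (b.get 0).pos
  have hT : φ (b.get 0) = γ := hφFS _ (Hindman.FS.head b)
  have cancel : ∀ M : ℕ+, φ (M * b.get 0) = γ → φ M = 1 := by
    intro M h
    rw [φ_mul, hT] at h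
    exact mul_right_cancel (h.trans (one_mul γ).symm)
  refine ⟨fun k => (rs b (runs b k).1 (runs b k).2 : ℕ) / t, ?_, ?_⟩
  · intro k
    exact Nat.div_pos (Nat.le_of_dvd (rs b _ _).pos (runs_dvd b k)) ht0
  · intro J hJ
    obtain ⟨x, hxFS, hxsum⟩ := sum_runs_mem b J hJ
    set S : ℕ := ∑ k ∈ J, (rs b (runs b k).1 (runs b k).2 : ℕ) with hSdef
    have hsum_div : (∑ k ∈ J, (rs b (runs b k).1 (runs b k).2 : ℕ) / t) * t = S := by
      rw [Finset.sum_mul]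
      exact Finset.sum_congr rfl fun k _ => Nat.div_mul_cancel (runs_dvd b k)
    set m : ℕ := ∑ k ∈ J, (rs b (runs b k).1 (runs b k).2 : ℕ) / t with hmdef
    have hS0 : 0 < S := hxsum ▸ x.pos
    have hm0 : 0 < m := by
      rcases Nat.eq_zero_or_pos m with h | h
      · rw [h, zero_mul] at hsum_div; omega
      · exact h
    have hxFSb : x ∈ Hindman.FS b := by
      have := FS_drop_mono b (Nat.zero_le _) hxFS
      rwa [Stream'.drop_zero] at this
    have hφx : φ x = γ := hφFS x hxFSb
    obtain ⟨M, hM⟩ : ∃ M : ℕ+, (M : ℕ) = m := ⟨⟨m, hm0⟩, rfl⟩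
    have hxMT : x = M * b.get 0 := by
      apply PNat.coe_injective
      rw [PNat.mul_coe, hM]
      show (x : ℕ) = m * t
      omega
    have hφm : φ M = 1 := cancel _ (by rw [← hxMT]; exact hφx)
    refine ⟨hM ▸ mem_posIntSet_of M hφm, ?_⟩
    have hk₀ : 1 ≤ (runs b (J.min' hJ)).1 := runs_one_le b _
    have hx' : rs b 0 0 + x ∈ Hindman.FS (b.drop 0) := rs_add_mem b 0 0 (by omega) hxFS
    rw [Stream'.drop_zero] at hx'
    have hφx' : φ (rs b 0 0 + x) = γ := hφFS _ hx'
    have hcoe : ((rs b 0 0 + x : ℕ+) : ℕ) = t + S := by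
      rw [PNat.add_coe]
      show (b.get 0 : ℕ) + (x : ℕ) = t + S
      omega
    obtain ⟨M1, hM1⟩ : ∃ M1 : ℕ+, (M1 : ℕ) = m + 1 := ⟨⟨m + 1, by omega⟩, rfl⟩
    have hm1 : (rs b 0 0 + x) = M1 * b.get 0 := by
      apply PNat.coe_injective
      rw [PNat.mul_coe, hcoe, hM1]
      show t + S = (m + 1) * t
      have hmt : m * t = S := hsum_div
      nlinarith
    have hφm1 : φ M1 = 1 := cancel _ (by rw [← hm1]; exact hφx')
    exact hM1 ▸ mem_posIntSet_of M1 hφm1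
end

section
/- Let A be a multiplicative subgroup of the positive rationals ℚ₊ such that ℚ₊/A is cyclic of finite order, and let A* := A ∩ ℤ₊. Then there exists a positive integer a with a ∈ A* and a + 1 ∈ A*. -/
set_option linter.unusedVariables false

namespace HildebrandAux

/-! ### Infinite Ramsey theorem for triangles -/

variable {Q : Type*}

lemma exists_infinite_fiber [Finite Q] (S : Set ℕ) (hS : S.Infinite) (g : ℕ → Q) :
    ∃ c, {w ∈ S | g w = c}.Infinite := by
  by_contra h
  push_neg at h
  have hsub : S ⊆ ⋃ c : Q, {w ∈ S | g w = c} := fun w hw => Set.mem_iUnion.mpr ⟨g w, hw, rfl⟩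
  exact hS ((Set.finite_iUnion h).subset hsub)

structure RState (C : ℕ → ℕ → Q) where
  v : ℕ
  S : Set ℕ
  tag : Q
  inf : S.Infinite
  hlt : ∀ w ∈ S, v < w
  htag : ∀ w ∈ S, C v w = tag

noncomputable def mkState [Finite Q] (C : ℕ → ℕ → Q) (v : ℕ) (S : Set ℕ)
    (hS : S.Infinite) (hlt : ∀ w ∈ S, v < w) : RState C :=
  { v := v
    S := {w ∈ S | C v w = Classical.choose (exists_infinite_fiber S hS (C v))}
    tag := Classical.choose (exists_infinite_fiber S hS (C v))
    inf := Classical.choose_spec (exists_infinite_fiber S hS (C v))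
    hlt := fun w hw => hlt w hw.1
    htag := fun w hw => hw.2 }

noncomputable def stepState [Finite Q] (C : ℕ → ℕ → Q) (st : RState C) : RState C :=
  mkState C st.inf.nonempty.some (st.S \ Set.Iic st.inf.nonempty.some)
    (st.inf.diff (Set.finite_Iic _))
    (fun w hw => not_le.mp (fun h => hw.2 (Set.mem_Iic.mpr h)))

lemma stepState_v_mem [Finite Q] (C : ℕ → ℕ → Q) (st : RState C) :
    (stepState C st).v ∈ st.S := st.inf.nonempty.some_mem

lemma stepState_S_subset [Finite Q] (C : ℕ → ℕ → Q) (st : RState C) :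
    (stepState C st).S ⊆ st.S := fun w hw => hw.1.1

noncomputable def seqState [Finite Q] (C : ℕ → ℕ → Q) : ℕ → RState C
  | 0 => mkState C 0 (Set.Ioi 0) (Set.Ioi_infinite 0) (fun w hw => hw)
  | n + 1 => stepState C (seqState C n)

lemma seq_S_subset [Finite Q] (C : ℕ → ℕ → Q) {n k : ℕ} (h : n ≤ k) :
    (seqState C k).S ⊆ (seqState C n).S := by
  induction k, h using Nat.le_induction with
  | base => exact fun w hw => hw
  | succ k hk ih => exact fun w hw => ih (stepState_S_subset C (seqState C k) hw)

lemma seq_v_mem [Finite Q] (C : ℕ → ℕ → Q) {n k : ℕ} (h : n < k) :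
    (seqState C k).v ∈ (seqState C n).S := by
  have hk : n + 1 ≤ k := h
  induction k, hk using Nat.le_induction with
  | base => exact stepState_v_mem C (seqState C n)
  | succ k hk ih =>
      exact seq_S_subset C (Nat.le_of_succ_le hk) (stepState_v_mem C (seqState C k))

lemma seq_v_lt [Finite Q] (C : ℕ → ℕ → Q) {n k : ℕ} (h : n < k) :
    (seqState C n).v < (seqState C k).v :=
  (seqState C n).hlt _ (seq_v_mem C h)

lemma seq_edge [Finite Q] (C : ℕ → ℕ → Q) {n k : ℕ} (h : n < k) :
    C (seqState C n).v (seqState C k).v = (seqState C n).tag :=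
  (seqState C n).htag _ (seq_v_mem C h)

/-- Infinite Ramsey for triangles: any finite colouring of pairs of naturals admits a
monochromatic triangle. -/
theorem exists_mono_triangle [Finite Q] (C : ℕ → ℕ → Q) :
    ∃ i j k, i < j ∧ j < k ∧ C i j = C j k ∧ C i j = C i k := by
  obtain ⟨a, b, hab, heq⟩ :=
    Finite.exists_ne_map_eq_of_infinite (fun n => (seqState C n).tag)
  rcases lt_or_gt_of_ne hab with h | h
  · exact ⟨(seqState C a).v, (seqState C b).v, (seqState C (b+1)).v,
      seq_v_lt C h, seq_v_lt C (Nat.lt_succ_self b),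
      by rw [seq_edge C h, seq_edge C (Nat.lt_succ_self b), heq],
      by rw [seq_edge C h, seq_edge C (h.trans (Nat.lt_succ_self b))]⟩
  · exact ⟨(seqState C b).v, (seqState C a).v, (seqState C (a+1)).v,
      seq_v_lt C h, seq_v_lt C (Nat.lt_succ_self a),
      by rw [seq_edge C h, seq_edge C (Nat.lt_succ_self a), heq],
      by rw [seq_edge C h, seq_edge C (h.trans (Nat.lt_succ_self a))]⟩

/-! ### A sequence whose differences satisfy a universal divisibility property -/

/-- Product of all pairwise differences of entries of `l`. -/
def stepProd (l : List ℕ) : ℕ :=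
  (((l ×ˢ l).filter (fun p => p.1 < p.2)).map (fun p => p.2 - p.1)).prod

def hist : ℕ → List ℕ
  | 0 => [0]
  | n + 1 => ((hist n).head! + stepProd (hist n)) :: hist n

def mseq (n : ℕ) : ℕ := (hist n).head!

lemma mseq_succ (n : ℕ) : mseq (n + 1) = mseq n + stepProd (hist n) := rfl

lemma mseq_mem_hist (n : ℕ) : mseq n ∈ hist n := by
  cases n with
  | zero => simp [mseq, hist]
  | succ n => exact List.mem_cons_self

lemma mem_hist_of_le {i n : ℕ} (h : i ≤ n) : mseq i ∈ hist n := by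
  induction n with
  | zero => cases Nat.le_zero.mp h; exact mseq_mem_hist 0
  | succ n ih =>
      rcases Nat.lt_succ_iff_lt_or_eq.mp (Nat.lt_succ_of_le h) with h' | h'
      · exact List.mem_cons_of_mem _ (ih (Nat.lt_succ_iff.mp h'))
      · cases h'; exact mseq_mem_hist _
  -- note: careful; fixed below if broken

lemma stepProd_pos (l : List ℕ) : 0 < stepProd l := by
  apply List.prod_pos
  intro a ha
  simp only [stepProd, List.mem_map, List.mem_filter] at ha
  obtain ⟨p, ⟨_, hp⟩, rfl⟩ := ha
  have : p.1 < p.2 := by simpa using hp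
  omega

lemma mseq_strictMono : StrictMono mseq := by
  apply strictMono_nat_of_lt_succ
  intro n
  rw [mseq_succ]
  have := stepProd_pos (hist n)
  omega

lemma sub_dvd_stepProd {x y : ℕ} {l : List ℕ} (hx : x ∈ l) (hy : y ∈ l) (hxy : x < y) :
    (y - x) ∣ stepProd l := by
  apply List.dvd_prod
  simp only [List.mem_map, List.mem_filter]
  exact ⟨(x, y), ⟨List.mem_product.mpr ⟨hx, hy⟩, by simpa using hxy⟩, rfl⟩

lemma mseq_eq_add_sum {j k : ℕ} (h : j ≤ k) :
    mseq k = mseq j + ∑ t ∈ Finset.Ico j k, stepProd (hist t) := by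
  induction k, h using Nat.le_induction with
  | base => simp
  | succ k hk ih =>
      rw [mseq_succ, ih, Finset.sum_Ico_succ_top hk]
      omega

lemma key_dvd {i j k : ℕ} (hij : i < j) (hjk : j < k) :
    (mseq j - mseq i) ∣ (mseq k - mseq j) := by
  have hsum := mseq_eq_add_sum hjk.le
  have : mseq k - mseq j = ∑ t ∈ Finset.Ico j k, stepProd (hist t) := by omega
  rw [this]
  apply Finset.dvd_sum
  intro t ht
  rw [Finset.mem_Ico] at ht
  exact sub_dvd_stepProd (mem_hist_of_le (le_trans hij.le ht.1))
    (mem_hist_of_le ht.1) (mseq_strictMono hij)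

end HildebrandAux

open HildebrandAux in
/-- Hildebrand's theorem: if `A ≤ ℚ₊` is a subgroup with `ℚ₊/A` finite cyclic,
then there is a positive integer `a` with `a ∈ A*` and `a + 1 ∈ A*`. -/
theorem hildebrand (A : Subgroup ↥posRat)
    (hfin : Finite (↥posRat ⧸ A)) (hcyc : IsCyclic (↥posRat ⧸ A)) :
    ∃ a : ℕ, 0 < a ∧ a ∈ posIntSet A ∧ a + 1 ∈ posIntSet A := by
  classical
  haveI hnorm : A.Normal := ⟨fun n hn g => by
    rw [mul_comm g n, mul_inv_cancel_right]; exact hn⟩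
  -- the positive natural `k` as an element of `posRat`
  have hpos : ∀ k : ℕ, 0 < k → ((k : ℚ) ≠ 0) := by
    intro k hk
    exact_mod_cast hk.ne'
  set pq : ℕ → ↥posRat := fun k =>
    if h : 0 < k then ⟨Units.mk0 (k : ℚ) (hpos k h), by
      simp only [posRat, Subgroup.mem_mk, Set.mem_setOf_eq, Units.val_mk0]
      exact (show (0:ℚ) < (k:ℚ) by exact_mod_cast h)⟩
    else 1 with hpq
  have pq_coe : ∀ (k : ℕ) (h : 0 < k), ((pq k : ℚˣ) : ℚ) = (k : ℚ) := by
    intro k h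
    simp [hpq, dif_pos h]
  have pq_mul : ∀ (a b : ℕ), 0 < a → 0 < b → pq (a * b) = pq a * pq b := by
    intro a b ha hb
    have hab : 0 < a * b := Nat.mul_pos ha hb
    apply Subtype.ext
    apply Units.ext
    push_cast [hpq, dif_pos ha, dif_pos hb, dif_pos hab]
    norm_num
  -- colouring by the class in the quotient
  set u : ℕ → (↥posRat ⧸ A) := fun d => QuotientGroup.mk (pq d) with hu
  have u_mul : ∀ (a b : ℕ), 0 < a → 0 < b → u (a * b) = u a * u b := by
    intro a b ha hb
    rw [hu]
    simp only
    rw [pq_mul a b ha hb, QuotientGroup.mk_mul]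
  obtain ⟨i, j, k, hij, hjk, h1, h2⟩ :=
    exists_mono_triangle (fun p r => u (mseq r - mseq p))
  set x := mseq j - mseq i with hx
  set y := mseq k - mseq j with hy
  have hmij : mseq i < mseq j := mseq_strictMono hij
  have hmjk : mseq j < mseq k := mseq_strictMono hjk
  have hxpos : 0 < x := by omega
  have hypos : 0 < y := by omega
  obtain ⟨q, hq⟩ : x ∣ y := key_dvd hij hjk
  have hqpos : 0 < q := by
    rcases Nat.eq_zero_or_pos q with h | h
    · subst h; omega
    · exact h
  have hsum : mseq k - mseq i = x + y := by omega
  -- h1 : u x = u y, h2 : u x = u (x + y)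
  have e1 : u q = 1 := by
    have : u y = u x * u q := by rw [hq, u_mul x q hxpos hqpos]
    rw [this] at h1
    exact left_eq_mul.mp h1
  have e2 : u (q + 1) = 1 := by
    have hxy : x + y = x * (q + 1) := by rw [hq]; ring
    have : u (x + y) = u x * u (q + 1) := by
      rw [hxy, u_mul x (q + 1) hxpos (Nat.succ_pos q)]
    rw [hsum, this] at h2
    exact left_eq_mul.mp h2
  have mem1 : pq q ∈ A := (QuotientGroup.eq_one_iff (pq q)).mp e1
  have mem2 : pq (q + 1) ∈ A := (QuotientGroup.eq_one_iff (pq (q + 1))).mp e2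
  exact ⟨q, hqpos, ⟨hqpos, pq q, mem1, pq_coe q hqpos⟩,
    ⟨Nat.succ_pos q, pq (q + 1), mem2, pq_coe (q + 1) (Nat.succ_pos q)⟩⟩
end

section
/- Fix k ≥ 1. If f : ℤ₊ → ℂ is completely multiplicative (f(mn) = f(m)f(n) for all m, n) and takes values in the k-th roots of unity, then there exists a ∈ ℤ₊ with f(a) = f(a+1) = 1. -/
/-- Elements of an FS-set of a stream of positive naturals are positive. -/
theorem fs_pos {a : Stream' ℕ} {m : ℕ} (h : m ∈ Hindman.FS a) :
    (∀ i, 0 < a.get i) → 0 < m := by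
  induction h with
  | head' a => exact fun ha => ha 0
  | tail' a m h ih => exact fun ha => ih fun i => ha (i + 1)
  | cons' a m h ih => exact fun ha => Nat.add_pos_left (ha 0) _

/-- Hildebrand's theorem for completely multiplicative functions: if
`f : ℤ₊ → ℂ` is completely multiplicative and takes values in the `k`-th
roots of unity (`k ≥ 1`), then there is `a` with `f a = f (a+1) = 1`. -/
theorem hildebrand_mult (k : ℕ) (hk : 1 ≤ k) (f : ℕ+ → ℂ)
    (hmul : ∀ m n : ℕ+, f (m * n) = f m * f n)
    (hroots : ∀ n : ℕ+, (f n) ^ k = 1) :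
    ∃ a : ℕ+, f a = 1 ∧ f (a + 1) = 1 := by
  classical
  have hk0 : 0 < k := hk
  set F : ℕ → ℂ := fun n => f n.toPNat' with hF
  -- the finite set of colors
  have hfin : (Set.Finite {z : ℂ | z ^ k = 1}) := by
    apply Set.Finite.subset (Polynomial.nthRootsFinset k (1 : ℂ)).finite_toSet
    intro z hz
    simpa [Polynomial.mem_nthRootsFinset hk0 (1 : ℂ)] using hz
  set s : Set (Set ℕ) := (fun z => {n : ℕ | 0 < n ∧ F n = z}) '' {z : ℂ | z ^ k = 1}
    with hs
  have sfin : s.Finite := hfin.image _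
  -- apply Hindman's theorem
  have scov : Hindman.FS (Stream'.const 1) ⊆ ⋃₀ s := by
    intro m hm
    have hmpos : 0 < m := fs_pos hm (fun i => by simp)
    exact ⟨{n : ℕ | 0 < n ∧ F n = F m}, ⟨F m, hroots _, rfl⟩, hmpos, rfl⟩
  obtain ⟨c, hcs, b, hb⟩ := Hindman.FS_partition_regular (Stream'.const 1) s sfin scov
  obtain ⟨z, hz, rfl⟩ := hcs
  -- the first element
  set x : ℕ := b.get 0 with hxdef
  have hxFS : x ∈ Hindman.FS b := Hindman.FS.singleton b 0
  obtain ⟨hx0, hxz⟩ := hb hxFS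
  -- partial sums
  set T : ℕ → ℕ := fun j => ∑ i ∈ Finset.Ico 1 (j + 1), b.get i with hT
  -- main step, given two congruent partial sums
  have key : ∀ i j : ℕ, 1 ≤ i → i < j → T i % x = T j % x →
      ∃ a : ℕ+, f a = 1 ∧ f (a + 1) = 1 := by
    intro i j hi1 hlt hmod
    set y : ℕ := ∑ l ∈ Finset.Ico (i + 1) (j + 1), b.get l with hy
    have hsplit : T i + y = T j := by
      simpa [hT, hy] using
        Finset.sum_Ico_consecutive (fun l => b.get l)
          (by omega : 1 ≤ i + 1) (by omega : i + 1 ≤ j + 1)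
    have hne : (Finset.Ico (i + 1) (j + 1)).Nonempty :=
      ⟨i + 1, by simp [Finset.mem_Ico]; omega⟩
    have hyFS : y ∈ Hindman.FS b := Hindman.FS.finset_sum b _ hne
    have h0 : (0 : ℕ) ∉ Finset.Ico (i + 1) (j + 1) := by simp
    have hxyFS : x + y ∈ Hindman.FS b := by
      have := Hindman.FS.finset_sum b (insert 0 (Finset.Ico (i + 1) (j + 1)))
        (Finset.insert_nonempty _ _)
      rwa [Finset.sum_insert h0] at this
    obtain ⟨hy0, hyz⟩ := hb hyFS
    obtain ⟨hxy0, hxyz⟩ := hb hxyFS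
    -- x divides y
    have hdvd : x ∣ y := by
      have h1 : T i ≡ T i + y [MOD x] := by
        rw [hsplit]; exact hmod
      have h2 := (Nat.modEq_iff_dvd' (Nat.le_add_right _ _)).mp h1
      simpa using h2
    obtain ⟨t, ht⟩ := hdvd
    have ht0 : 0 < t := by
      rcases Nat.eq_zero_or_pos t with h | h
      · subst h; rw [Nat.mul_zero] at ht; omega
      · exact h
    -- move to ℕ+
    set X : ℕ+ := ⟨x, hx0⟩ with hX
    set Tp : ℕ+ := ⟨t, ht0⟩ with hTp
    have hcoe : ∀ (n : ℕ) (hn : 0 < n), (n.toPNat' : ℕ+) = ⟨n, hn⟩ := by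
      intro n hn
      apply PNat.coe_injective
      simp [PNat.toPNat'_coe hn]
    have hfx : f X = z := by
      have h' : f x.toPNat' = z := hxz
      rwa [hcoe x hx0] at h'
    have hfy : f (X * Tp) = z := by
      have h' : f y.toPNat' = z := hyz
      rw [hcoe y hy0] at h'
      convert h' using 2
      congr 1
      apply PNat.coe_injective
      simp [hX, hTp, ht]
      rfl
    have hfxy : f (X * (Tp + 1)) = z := by
      have h' : f (x + y).toPNat' = z := hxyz
      rw [hcoe (x + y) hxy0] at h'
      convert h' using 2
      congr 1
      apply PNat.coe_injective
      show x * (t + 1) = x + y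
      rw [ht]; ring
    have hfX0 : f X ≠ 0 := by
      intro h
      have := hroots X
      rw [h, zero_pow (by omega : k ≠ 0)] at this
      exact zero_ne_one this
    refine ⟨Tp, ?_, ?_⟩
    · have : f X * f Tp = f X := by rw [← hmul, hfy, hfx]
      have := mul_left_cancel₀ hfX0 (this.trans (mul_one (f X)).symm)
      exact this
    · have : f X * f (Tp + 1) = f X := by rw [← hmul, hfxy, hfx]
      exact mul_left_cancel₀ hfX0 (this.trans (mul_one (f X)).symm)
  -- pigeonhole
  have hpig : ∃ i ∈ Finset.Icc 1 (x + 1), ∃ j ∈ Finset.Icc 1 (x + 1),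
      i ≠ j ∧ T i % x = T j % x := by
    apply Finset.exists_ne_map_eq_of_card_lt_of_maps_to
      (s := Finset.Icc 1 (x + 1)) (t := Finset.range x)
    · simp [Nat.card_Icc]
    · intro i _
      exact Finset.mem_range.mpr (Nat.mod_lt _ hx0)
  obtain ⟨i, hi, j, hj, hij, hmod⟩ := hpig
  rcases hij.lt_or_gt with hlt | hlt
  · exact key i j (Finset.mem_Icc.mp hi).1 hlt hmod
  · exact key j i (Finset.mem_Icc.mp hj).1 hlt hmod.symm
end

section
/- Fix k ≥ 1. There exists a constant c(k) such that for every completely multiplicative function f : ℤ₊ → ℂ taking values in the k-th roots of unity, there exists a ≤ c(k) with f(a) = f(a+1) = 1. Moreover, this uniform version follows by a compactness argument from the version without the bound. -/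
/-- The uniform version of Hildebrand's theorem follows by compactness from the
non-uniform version: assuming that every completely multiplicative
`f : ℤ₊ → ℂ` with values in the `k`-th roots of unity (`k ≥ 1`) has some `a`
with `f a = f (a+1) = 1`, there is a constant `c = c(k)` such that for every
such `f` one can find such an `a` with `a ≤ c`. -/
theorem hildebrand_uniform (k : ℕ) (hk : 1 ≤ k)
    (hnonuniform : ∀ f : ℕ+ → ℂ,
      (∀ m n : ℕ+, f (m * n) = f m * f n) →
      (∀ n : ℕ+, (f n) ^ k = 1) →
      ∃ a : ℕ+, f a = 1 ∧ f (a + 1) = 1) :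
    ∃ c : ℕ+, ∀ f : ℕ+ → ℂ,
      (∀ m n : ℕ+, f (m * n) = f m * f n) →
      (∀ n : ℕ+, (f n) ^ k = 1) →
      ∃ a : ℕ+, a ≤ c ∧ f a = 1 ∧ f (a + 1) = 1 := by
  by_contra h
  push_neg at h
  -- the set of k-th roots of unity in ℂ is finite, hence closed and compact
  set Z : Set ℂ := {z | z ^ k = 1} with hZ
  have hZfin : Z.Finite := by
    apply Set.Finite.subset ((Polynomial.nthRoots k (1 : ℂ)).toFinset.finite_toSet)
    intro z hz
    simp only [Finset.coe_sort_coe, Multiset.mem_toFinset, Finset.mem_coe]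
    rw [Polynomial.mem_nthRoots (by omega : 0 < k)]
    exact hz
  have hZclosed : IsClosed Z := hZfin.isClosed
  set Z' : Set ℂ := Z \ {1} with hZ'
  have hZ'closed : IsClosed Z' := (hZfin.subset Set.diff_subset).isClosed
  -- the family of closed "bad" sets
  set F : ℕ+ → Set (ℕ+ → ℂ) := fun c =>
    {f | (∀ n, f n ∈ Z) ∧ (∀ m n : ℕ+, f (m * n) = f m * f n) ∧
      ∀ a : ℕ+, a ≤ c → f a ∈ Z' ∨ f (a + 1) ∈ Z'} with hF
  have hFclosed : ∀ c, IsClosed (F c) := by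
    intro c
    have h1 : IsClosed {f : ℕ+ → ℂ | ∀ n, f n ∈ Z} := by
      have : {f : ℕ+ → ℂ | ∀ n, f n ∈ Z} = ⋂ n, (fun f => f n) ⁻¹' Z := by
        ext f; simp
      rw [this]
      exact isClosed_iInter fun n => hZclosed.preimage (continuous_apply n)
    have h2 : IsClosed {f : ℕ+ → ℂ | ∀ m n : ℕ+, f (m * n) = f m * f n} := by
      have : {f : ℕ+ → ℂ | ∀ m n : ℕ+, f (m * n) = f m * f n} =
          ⋂ m, ⋂ n, {f | f (m * n) = f m * f n} := by
        ext f; simp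
      rw [this]
      exact isClosed_iInter fun m => isClosed_iInter fun n =>
        isClosed_eq (continuous_apply _) ((continuous_apply m).mul (continuous_apply n))
    have h3 : IsClosed {f : ℕ+ → ℂ | ∀ a : ℕ+, a ≤ c → f a ∈ Z' ∨ f (a + 1) ∈ Z'} := by
      have : {f : ℕ+ → ℂ | ∀ a : ℕ+, a ≤ c → f a ∈ Z' ∨ f (a + 1) ∈ Z'} =
          ⋂ a, ⋂ (_ : a ≤ c),
            ((fun f : ℕ+ → ℂ => f a) ⁻¹' Z' ∪ (fun f : ℕ+ → ℂ => f (a + 1)) ⁻¹' Z') := by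
        ext f; simp
      rw [this]
      exact isClosed_iInter fun a => isClosed_iInter fun _ =>
        (hZ'closed.preimage (continuous_apply a)).union
          (hZ'closed.preimage (continuous_apply (a + 1)))
    have : F c = {f : ℕ+ → ℂ | ∀ n, f n ∈ Z} ∩
        ({f | ∀ m n : ℕ+, f (m * n) = f m * f n} ∩
          {f | ∀ a : ℕ+, a ≤ c → f a ∈ Z' ∨ f (a + 1) ∈ Z'}) := by
      ext f; simp [hF, and_assoc]
    rw [this]
    exact h1.inter (h2.inter h3)
  -- each F c is compact, being a closed subset of a compact product
  have hK : IsCompact (Set.pi Set.univ (fun _ : ℕ+ => Z)) :=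
    isCompact_univ_pi fun _ => hZfin.isCompact
  have hFcompact : ∀ c, IsCompact (F c) := by
    intro c
    refine IsCompact.of_isClosed_subset hK (hFclosed c) ?_
    intro f hf
    simp only [Set.mem_pi, Set.mem_univ, forall_true_left]
    exact fun n => hf.1 n
  -- each F c is nonempty by the failure of uniformity
  have hFne : ∀ c, (F c).Nonempty := by
    intro c
    obtain ⟨f, hmul, hpow, hbad⟩ := h c
    refine ⟨f, fun n => hpow n, hmul, fun a ha => ?_⟩
    by_cases h1 : f a = 1
    · exact Or.inr ⟨hpow (a + 1), hbad a ha h1⟩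
    · exact Or.inl ⟨hpow a, h1⟩
  -- the family is directed by reverse inclusion
  have hanti : Antitone F := by
    intro c d hcd f hf
    exact ⟨hf.1, hf.2.1, fun a ha => hf.2.2 a (ha.trans hcd)⟩
  have hdir : Directed (· ⊇ ·) F := fun c d =>
    ⟨c ⊔ d, hanti le_sup_left, hanti le_sup_right⟩
  -- a function in the intersection contradicts the non-uniform hypothesis
  obtain ⟨f, hf⟩ := IsCompact.nonempty_iInter_of_directed_nonempty_isCompact_isClosed
    F hdir hFne hFcompact hFclosed
  have hfc : ∀ c, f ∈ F c := by simpa using hf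
  obtain ⟨a, ha1, ha2⟩ := hnonuniform f (hfc 1).2.1 (fun n => (hfc 1).1 n)
  rcases (hfc a).2.2 a le_rfl with hbad | hbad
  · exact hbad.2 ha1
  · exact hbad.2 ha2
end

section
/- Hindman's finite unions theorem: for every finite partition of the collection of finite nonempty subsets of ℤ₊ into classes M₁, …, M_k, there exist finite nonempty sets A₁ ≺ A₂ ≺ … and an index j such that every finite union ⋃_{i∈I} Aᵢ (I finite nonempty) lies in M_j. -/
open Hindman Finset

namespace HindmanFU

/-- The set of binary digit positions of `n`. -/
def toSet (n : ℕ) : Finset ℕ := n.bitIndices.toFinset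

lemma sum_toSet (n : ℕ) : ∑ e ∈ toSet n, 2 ^ e = n := by
  rw [toSet, List.sum_toFinset _ (Nat.bitIndices_sorted).nodup,
    Nat.twoPowSum_bitIndices]

lemma toSet_sum (S : Finset ℕ) : toSet (∑ e ∈ S, 2 ^ e) = S := by
  have h1 : ∑ e ∈ S, 2 ^ e = ((S.sort (· ≤ ·)).map (fun i => 2 ^ i)).sum := by
    rw [← List.sum_toFinset _ (S.sort_nodup _), Finset.sort_toFinset]
  rw [toSet, h1, Nat.bitIndices_twoPowsum S.sortedLT_sort, Finset.sort_toFinset]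

lemma toSet_nonempty {n : ℕ} (hn : n ≠ 0) : (toSet n).Nonempty := by
  rcases (toSet n).eq_empty_or_nonempty with h | h
  · exfalso; apply hn; rw [← sum_toSet n, h, Finset.sum_empty]
  · exact h

lemma lt_of_mem_toSet {n e M : ℕ} (h : n < 2 ^ M) (he : e ∈ toSet n) : e < M := by
  have := Nat.two_pow_le_of_mem_bitIndices (List.mem_toFinset.mp he)
  have h2 : (2:ℕ) ^ e < 2 ^ M := lt_of_le_of_lt this h
  exact (Nat.pow_lt_pow_iff_right (by norm_num)).mp h2

lemma le_of_mem_toSet {n e M : ℕ} (h : 2 ^ M ∣ n) (he : e ∈ toSet n) : M ≤ e := by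
  obtain ⟨m, rfl⟩ := h
  rw [toSet, Nat.bitIndices_two_pow_mul] at he
  obtain ⟨x, _, rfl⟩ := List.mem_map.mp (List.mem_toFinset.mp he)
  omega

/-- Partial sums of a stream of positive naturals. -/
def psum (t : Stream' ℕ+) : ℕ → ℕ+
  | 0 => t.head
  | n + 1 => t.head + psum t.tail n

lemma psum_mem_FS (t : Stream' ℕ+) (n : ℕ) : psum t n ∈ FS t := by
  induction n generalizing t with
  | zero => exact FS.head t
  | succ n ih => exact FS.cons t _ (ih t.tail)

lemma psum_coe (t : Stream' ℕ+) (n : ℕ) :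
    (psum t n : ℕ) = ∑ i ∈ Finset.range (n + 1), (t.get i : ℕ) := by
  induction n generalizing t with
  | zero => simp [psum, Stream'.head]
  | succ n ih =>
    rw [psum, Finset.sum_range_succ', PNat.add_coe, ih]
    simp [Stream'.get_tail, Stream'.head, add_comm]

lemma exists_dvd_mem_FS (t : Stream' ℕ+) (M : ℕ) : ∃ m ∈ FS t, 2 ^ M ∣ (m : ℕ) := by
  set P : ℕ → ℕ := fun r => ∑ i ∈ Finset.range r, (t.get i : ℕ) with hP
  have key : ∀ r s : ℕ, r < s → P r % 2 ^ M = P s % 2 ^ M →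
      ∃ m ∈ FS t, 2 ^ M ∣ (m : ℕ) := by
    intro r s hrs heq
    refine ⟨psum (t.drop r) (s - r - 1), FS_iter_tail_sub_FS t r (psum_mem_FS _ _), ?_⟩
    have hle : P r ≤ P s :=
      Finset.sum_le_sum_of_subset (Finset.range_subset_range.mpr hrs.le)
    have hdvd : 2 ^ M ∣ P s - P r := (Nat.modEq_iff_dvd' hle).mp heq
    have hval : (psum (t.drop r) (s - r - 1) : ℕ) = P s - P r := by
      rw [psum_coe]
      have h1 : s - r - 1 + 1 = s - r := by omega
      have h2 : P s = P r + ∑ i ∈ Finset.Ico r s, (t.get i : ℕ) :=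
        (Finset.sum_range_add_sum_Ico _ hrs.le).symm
      rw [h1, h2]
      rw [Finset.sum_Ico_eq_sum_range]
      simp only [Stream'.get_drop]
      rw [Nat.add_sub_cancel_left]
    rw [hval]; exact hdvd
  obtain ⟨r, hr, s, hs, hrs, heq⟩ :
      ∃ r ∈ Finset.range (2 ^ M + 1), ∃ s ∈ Finset.range (2 ^ M + 1),
        r ≠ s ∧ P r % 2 ^ M = P s % 2 ^ M := by
    apply Finset.exists_ne_map_eq_of_card_lt_of_maps_to (t := Finset.range (2 ^ M))
    · simp
    · intro a _
      exact Finset.mem_range.mpr (Nat.mod_lt _ (by positivity))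
  rcases hrs.lt_or_gt with h | h
  · exact key r s h heq
  · exact key s r h heq.symm

lemma step (t : Stream' ℕ+) (M : ℕ) :
    ∃ (m : ℕ+) (t' : Stream' ℕ+), 2 ^ M ∣ (m : ℕ) ∧ m ∈ FS t ∧ FS t' ⊆ FS t ∧
      ∀ x ∈ FS t', m + x ∈ FS t := by
  obtain ⟨m, hm, hdvd⟩ := exists_dvd_mem_FS t M
  obtain ⟨n, hn⟩ := FS.add hm
  exact ⟨m, t.drop n, hdvd, hm, FS_iter_tail_sub_FS t n, hn⟩

end HindmanFU

open HindmanFU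

/-- Hindman's finite unions theorem: for every finite coloring (partition into
`k` classes) of the finite nonempty subsets of `ℕ`, there exist finite nonempty
sets `A 0 ≺ A 1 ≺ …` and a color `j` such that every finite nonempty union
`⋃_{i ∈ I} A i` gets color `j`. -/
theorem hindman_finite_unions (k : ℕ) (c : Finset ℕ → Fin k) :
    ∃ A : ℕ → Finset ℕ, ∃ hne : ∀ i, (A i).Nonempty,
      (∀ i, (A i).max' (hne i) < (A (i + 1)).min' (hne (i + 1))) ∧
      ∃ j : Fin k, ∀ I : Finset ℕ, I.Nonempty → c (I.biUnion A) = j := by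
  classical
  rcases Nat.eq_zero_or_pos k with rfl | hk
  · exact (c ∅).elim0
  -- apply Hindman's theorem on finite sums in ℕ+
  obtain ⟨S, hS, a, ha⟩ := Hindman.exists_FS_of_finite_cover
    (Set.range fun j : Fin k => {n : ℕ+ | c (toSet (n : ℕ)) = j})
    (Set.finite_range _)
    (by
      intro n _
      exact Set.mem_sUnion.mpr ⟨_, Set.mem_range_self (c (toSet (n : ℕ))), rfl⟩)
  obtain ⟨j, rfl⟩ := hS
  -- recursively extract a sequence with binary supports going to the right
  choose em et edvd emem esub eadd using fun p : Stream' ℕ+ × ℕ => step p.1 p.2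
  set g : ℕ → Stream' ℕ+ × ℕ := fun n =>
    Nat.rec (a, 0) (fun _ p => (et p, p.2 + (em p : ℕ) + 1)) n with hg
  set b : ℕ → ℕ+ := fun n => em (g n) with hb
  set M : ℕ → ℕ := fun n => (g n).2 with hM
  set t : ℕ → Stream' ℕ+ := fun n => (g n).1 with ht
  have hMsucc : ∀ n, M (n + 1) = M n + (b n : ℕ) + 1 := fun n => rfl
  have htsucc : ∀ n, t (n + 1) = et (g n) := fun n => rfl
  have hdvd : ∀ n, 2 ^ M n ∣ (b n : ℕ) := fun n => edvd (g n)
  have hmem : ∀ n, b n ∈ FS (t n) := fun n => emem (g n)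
  have hsub : ∀ n, FS (t (n + 1)) ⊆ FS (t n) := fun n => by
    rw [htsucc]; exact esub (g n)
  have hadd : ∀ n, ∀ x ∈ FS (t (n + 1)), b n + x ∈ FS (t n) := fun n => by
    rw [htsucc]; exact eadd (g n)
  have hblt : ∀ n, (b n : ℕ) < 2 ^ M (n + 1) := by
    intro n
    calc (b n : ℕ) < 2 ^ (b n : ℕ) := Nat.lt_two_pow_self
    _ ≤ 2 ^ M (n + 1) := Nat.pow_le_pow_right (by norm_num) (by rw [hMsucc]; omega)
  have hMmono : ∀ {m n : ℕ}, m ≤ n → M m ≤ M n := by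
    intro m n h
    induction n with
    | zero =>
      have h0 : m = 0 := Nat.le_zero.mp h
      subst h0; exact le_rfl
    | succ n ih =>
      rcases Nat.lt_or_ge m (n + 1) with h' | h'
      · have := ih (by omega); rw [hMsucc]; omega
      · have hmn : m = n + 1 := by omega
        subst hmn; exact le_rfl
  have hFSmono : ∀ {m n : ℕ}, m ≤ n → FS (t n) ⊆ FS (t m) := by
    intro m n h
    induction n with
    | zero =>
      have : m = 0 := by omega
      subst this; exact fun _ hx => hx
    | succ n ih =>
      rcases Nat.lt_or_ge m (n + 1) with h' | h'
      · exact fun x hx => ih (by omega) (hsub n hx)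
      · have : m = n + 1 := by omega
        subst this; exact fun _ hx => hx
  have hFSa : ∀ n, FS (t n) ⊆ FS a := by
    intro n
    have h0 : t 0 = a := rfl
    rw [← h0]
    exact hFSmono (Nat.zero_le n)
  -- every finite sum of the `b i` over `I` is realized by an element of `FS (t (min I))`
  have key : ∀ I : Finset ℕ, ∀ hI : I.Nonempty,
      ∃ m ∈ FS (t (I.min' hI)), (m : ℕ) = ∑ i ∈ I, (b i : ℕ) := by
    intro I
    induction I using Finset.strongInduction with
    | _ I ih =>
      intro hI
      set m0 := I.min' hI with hm0
      rcases (I.erase m0).eq_empty_or_nonempty with h | h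
      · have hIs : I = {m0} := by
          apply Finset.eq_singleton_iff_unique_mem.mpr
          refine ⟨I.min'_mem hI, fun x hx => ?_⟩
          by_contra hne
          exact (Finset.notMem_empty x) (h ▸ Finset.mem_erase.mpr ⟨hne, hx⟩)
        refine ⟨b m0, hmem m0, ?_⟩
        rw [hIs, Finset.sum_singleton]
      · have hmin' : m0 + 1 ≤ (I.erase m0).min' h :=
          Nat.succ_le_of_lt (Finset.min'_lt_of_mem_erase_min' _ _ (Finset.min'_mem _ _))
        obtain ⟨m, hmFS, hmval⟩ :=
          ih (I.erase m0) (Finset.erase_ssubset (I.min'_mem hI)) h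
        refine ⟨b m0 + m, hadd m0 _ (hFSmono hmin' hmFS), ?_⟩
        rw [PNat.add_coe, hmval, ← Finset.add_sum_erase _ _ (I.min'_mem hI)]
  -- define the sets
  refine ⟨fun i => toSet (b i : ℕ), fun i => toSet_nonempty (b i).ne_zero, ?_, j, ?_⟩
  · intro i
    have h1 : (toSet (b i : ℕ)).max' (toSet_nonempty (b i).ne_zero) < M (i + 1) :=
      lt_of_mem_toSet (hblt i) (Finset.max'_mem _ _)
    have h2 : M (i + 1) ≤ (toSet (b (i + 1) : ℕ)).min' (toSet_nonempty (b (i + 1)).ne_zero) :=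
      le_of_mem_toSet (hdvd (i + 1)) (Finset.min'_mem _ _)
    exact lt_of_lt_of_le h1 h2
  · intro I hI
    obtain ⟨m, hmFS, hmval⟩ := key I hI
    have hdlt : ∀ x y : ℕ, x < y → Disjoint (toSet (b x : ℕ)) (toSet (b y : ℕ)) := by
      intro x y hlt
      apply Finset.disjoint_left.mpr
      intro e hex hey
      have h1 : e < M (x + 1) := lt_of_mem_toSet (hblt x) hex
      have h2 : M y ≤ e := le_of_mem_toSet (hdvd y) hey
      have h3 : M (x + 1) ≤ M y := hMmono (Nat.succ_le_of_lt hlt)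
      omega
    have hdisj : (I : Set ℕ).PairwiseDisjoint (fun i => toSet (b i : ℕ)) := by
      intro x _ y _ hxy
      rcases hxy.lt_or_gt with h | h
      · exact hdlt x y h
      · exact (hdlt y x h).symm
    have hunion : I.biUnion (fun i => toSet (b i : ℕ)) = toSet (m : ℕ) := by
      rw [← toSet_sum (I.biUnion fun i => toSet (b i : ℕ))]
      congr 1
      rw [Finset.sum_biUnion hdisj, hmval]
      exact Finset.sum_congr rfl fun i _ => sum_toSet _
    rw [hunion]
    exact ha (hFSa _ hmFS)
end

section
/- If A ≤ ℚ₊ is a multiplicative subgroup of finite index and A* := A ∩ ℤ₊, then A* is an IP-set; in particular A* is infinite and nonempty. -/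
/-- A positive natural number as an element of `posRat`. -/
def natPos (n : ℕ) (hn : 0 < n) : ↥posRat :=
  ⟨Units.mk0 (n : ℚ) (by exact_mod_cast hn.ne'), by
    show (0 : ℚ) < _
    simpa using hn⟩

lemma natPos_mul (m n : ℕ) (hm : 0 < m) (hn : 0 < n) :
    natPos (m * n) (mul_pos hm hn) = natPos m hm * natPos n hn := by
  apply Subtype.ext
  apply Units.ext
  simp [natPos]

lemma natPos_pow (m k : ℕ) (hm : 0 < m) :
    natPos (m ^ k) (pow_pos hm k) = (natPos m hm) ^ k := by
  apply Subtype.ext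
  apply Units.ext
  simp [natPos]

lemma mem_posIntSet_iff (A : Subgroup ↥posRat) (n : ℕ) (hn : 0 < n) :
    n ∈ posIntSet A ↔ natPos n hn ∈ A := by
  constructor
  · rintro ⟨-, x, hx, hval⟩
    have : x = natPos n hn := by
      apply Subtype.ext
      apply Units.ext
      simpa [natPos] using hval
    rwa [← this]
  · intro h
    exact ⟨hn, natPos n hn, h, by simp [natPos]⟩

lemma pos_of_mem_FS : ∀ {a : Stream' ℕ} {m : ℕ}, m ∈ Hindman.FS a →
    (∀ i, 0 < a.get i) → 0 < m := by
  intro a m hm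
  induction hm with
  | head' a => intro ha; exact ha 0
  | tail' a m h ih => intro ha; exact ih fun i => ha (i + 1)
  | cons' a m h ih => intro ha; exact Nat.add_pos_left (ha 0) _

/-- If `A ≤ ℚ₊` has finite index, then `A*` is an IP-set; in particular `A*`
is infinite and nonempty. -/
theorem posIntSet_IPset (A : Subgroup ↥posRat) (hA : A.FiniteIndex) :
    (∃ a : ℕ → ℕ, (∀ i, 0 < a i) ∧
        ∀ I : Finset ℕ, I.Nonempty → (∑ i ∈ I, a i) ∈ posIntSet A) ∧
      (posIntSet A).Infinite ∧ (posIntSet A).Nonempty := by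
  classical
  haveI := hA
  haveI : Finite (↥posRat ⧸ A) := A.finite_quotient_of_finiteIndex
  -- the coloring of positive integers by cosets of `A`
  set ψ : ℕ → ↥posRat ⧸ A := fun n =>
    if h : 0 < n then QuotientGroup.mk (natPos n h) else 1 with hψ
  have ψ_mul : ∀ m n : ℕ, 0 < m → 0 < n → ψ (m * n) = ψ m * ψ n := by
    intro m n hm hn
    simp only [hψ, dif_pos hm, dif_pos hn, dif_pos (mul_pos hm hn)]
    rw [natPos_mul m n hm hn]
    rfl
  have ψ_pow : ∀ m k : ℕ, 0 < m → ψ (m ^ k) = (ψ m) ^ k := by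
    intro m k hm
    simp only [hψ, dif_pos hm, dif_pos (pow_pos hm k)]
    rw [natPos_pow m k hm]
    rfl
  -- apply Hindman's theorem to the fibers of ψ, as a cover of FS of the constant 1 stream
  set s : Set (Set ℕ) := Set.range (fun q : ↥posRat ⧸ A => {n | 0 < n ∧ ψ n = q}) with hs
  have sfin : s.Finite := Set.finite_range _
  have scov : Hindman.FS (Stream'.const 1) ⊆ ⋃₀ s := by
    intro n hn
    have hnpos : 0 < n := pos_of_mem_FS hn (fun i => by simp [Stream'.const])
    exact ⟨{m | 0 < m ∧ ψ m = ψ n}, ⟨ψ n, rfl⟩, hnpos, rfl⟩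
  obtain ⟨c, hc, b, hb⟩ := Hindman.FS_partition_regular (Stream'.const 1) s sfin scov
  obtain ⟨q, rfl⟩ := hc
  -- every element of FS b is positive and has color q
  have hFS : ∀ n ∈ Hindman.FS b, 0 < n ∧ ψ n = q := fun n hn => hb hn
  have hb0 : 0 < b.get 0 := (hFS _ (Hindman.FS.singleton b 0)).1
  have hq0 : ψ (b.get 0) = q := (hFS _ (Hindman.FS.singleton b 0)).2
  -- the multiplier m with ψ m = q⁻¹
  set k : ℕ := Nat.card (↥posRat ⧸ A) - 1 with hk
  set m : ℕ := (b.get 0) ^ k with hm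
  have hmpos : 0 < m := pow_pos hb0 k
  have hψm : ψ m * q = 1 := by
    rw [hm, ψ_pow _ _ hb0, hq0, ← pow_succ, hk,
      Nat.sub_add_cancel Nat.card_pos]
    exact pow_card_eq_one'
  -- membership of the sums
  have key : ∀ n ∈ Hindman.FS b, m * n ∈ posIntSet A := by
    intro n hn
    obtain ⟨hnpos, hnq⟩ := hFS n hn
    have hpos : 0 < m * n := mul_pos hmpos hnpos
    rw [mem_posIntSet_iff A _ hpos, ← QuotientGroup.eq_one_iff]
    have h1 : ψ (m * n) = 1 := by rw [ψ_mul _ _ hmpos hnpos, hnq, hψm]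
    have h2 : ψ (m * n) = QuotientGroup.mk (natPos (m * n) hpos) := by
      simp only [hψ, dif_pos hpos]
    exact h2.symm.trans h1
  -- assemble the sequence
  set a : ℕ → ℕ := fun i => m * b.get i with ha
  have hapos : ∀ i, 0 < a i := fun i =>
    mul_pos hmpos (hFS _ (Hindman.FS.singleton b i)).1
  have hsum : ∀ I : Finset ℕ, I.Nonempty → (∑ i ∈ I, a i) ∈ posIntSet A := by
    intro I hI
    have : (∑ i ∈ I, a i) = m * ∑ i ∈ I, b.get i := by
      rw [Finset.mul_sum]
    rw [this]
    exact key _ (Hindman.FS.finset_sum b I hI)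
  refine ⟨⟨a, hapos, hsum⟩, ?_, ?_⟩
  · -- infinite
    set T : ℕ → ℕ := fun j => ∑ i ∈ Finset.range (j + 1), a i with hT
    have hTmono : StrictMono T := by
      apply strictMono_nat_of_lt_succ
      intro j
      rw [hT]
      simp only [Finset.sum_range_succ _ (j + 1)]
      exact Nat.lt_add_of_pos_right (hapos (j + 1))
    exact Set.infinite_of_injective_forall_mem (f := T) hTmono.injective
      (fun j => hsum _ ⟨0, Finset.mem_range.mpr (Nat.succ_pos j)⟩)
  · exact ⟨a 0, hsum {0} ⟨0, Finset.mem_singleton_self 0⟩⟩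
end

section
/- Let A ≤ ℚ₊ be a multiplicative subgroup of finite index. Then there exist infinitely many positive integers a with a ∈ A and a + 1 ∈ A. -/
namespace InfConsecAux

/-- The unit of `ℚˣ` attached to a positive natural number. -/
def pu (n : ℕ+) : ℚˣ := Units.mk0 ((n : ℕ) : ℚ) (by exact_mod_cast n.ne_zero)

lemma pu_val (n : ℕ+) : ((pu n : ℚˣ) : ℚ) = ((n : ℕ) : ℚ) := rfl

lemma pu_mem : ∀ n : ℕ+, pu n ∈ posRat := by
  intro n
  show (0 : ℚ) < ((n : ℕ) : ℚ)
  exact_mod_cast n.pos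

/-- The element of `ℚ₊` attached to a positive natural number. -/
def pe (n : ℕ+) : ↥posRat := ⟨pu n, pu_mem n⟩

lemma pe_mul (m n : ℕ+) : pe (m * n) = pe m * pe n := by
  apply Subtype.ext
  apply Units.ext
  show (((m * n : ℕ+) : ℕ) : ℚ) = (((m : ℕ) : ℚ)) * (((n : ℕ) : ℚ))
  push_cast [PNat.mul_coe]
  ring

/-- The coloring of `ℕ+` by the quotient group. -/
def chi (A : Subgroup ↥posRat) (n : ℕ+) : ↥posRat ⧸ A := QuotientGroup.mk (pe n)

lemma chi_mul (A : Subgroup ↥posRat) (m n : ℕ+) :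
    chi A (m * n) = chi A m * chi A n := by
  unfold chi
  rw [pe_mul]
  rfl

lemma chi_eq_one_mem {A : Subgroup ↥posRat} {n : ℕ+} (h : chi A n = 1) :
    (n : ℕ) ∈ posIntSet A := by
  refine ⟨n.pos, pe n, ?_, ?_⟩
  · exact (QuotientGroup.eq_one_iff _).mp h
  · exact pu_val n

/-- Partial sums `b 0 + b 1 + ... + b l` of a stream of positive naturals. -/
def psum : Stream' ℕ+ → ℕ → ℕ+
  | b, 0 => b.head
  | b, l + 1 => b.head + psum b.tail l

lemma psum_mem_FS (b : Stream' ℕ+) (l : ℕ) : psum b l ∈ Hindman.FS b := by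
  induction l generalizing b with
  | zero => exact Hindman.FS.head b
  | succ l ih => exact Hindman.FS.cons b _ (ih b.tail)

lemma psum_lower (b : Stream' ℕ+) (l : ℕ) : l + 1 ≤ ((psum b l : ℕ+) : ℕ) := by
  induction l generalizing b with
  | zero => exact (psum b 0).pos
  | succ l ih =>
    show l + 1 + 1 ≤ ((b.head + psum b.tail l : ℕ+) : ℕ)
    rw [PNat.add_coe]
    have h1 := b.head.pos
    have h2 := ih b.tail
    omega

lemma psum_split (b : Stream' ℕ+) (k t : ℕ) :
    ((psum b (k + 1 + t) : ℕ+) : ℕ)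
      = ((psum b k : ℕ+) : ℕ) + ((psum (b.drop (k + 1)) t : ℕ+) : ℕ) := by
  induction k generalizing b with
  | zero =>
    have e : 0 + 1 + t = t + 1 := by omega
    rw [e]
    show ((b.head + psum b.tail t : ℕ+) : ℕ) = _
    rw [PNat.add_coe, ← Stream'.tail_eq_drop]
    rfl
  | succ k ih =>
    have e1 : k + 1 + 1 + t = (k + 1 + t) + 1 := by omega
    rw [e1]
    show ((b.head + psum b.tail (k + 1 + t) : ℕ+) : ℕ) = _
    rw [PNat.add_coe, ih b.tail]
    have e2 : b.tail.drop (k + 1) = b.drop (k + 1 + 1) := by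
      rw [Stream'.tail_eq_drop, Stream'.drop_drop, Nat.add_comm 1 (k + 1)]
    rw [e2]
    show _ = ((b.head + psum b.tail k : ℕ+) : ℕ) + _
    rw [PNat.add_coe]
    omega

end InfConsecAux

open InfConsecAux in
/-- If `A ≤ ℚ₊` has finite index, there are infinitely many positive integers
`a` with `a ∈ A` and `a + 1 ∈ A`. -/
theorem infinitely_many_consecutive (A : Subgroup ↥posRat) (hA : A.FiniteIndex) :
    {a : ℕ | 0 < a ∧ a ∈ posIntSet A ∧ a + 1 ∈ posIntSet A}.Infinite := by
  haveI := hA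
  haveI : Finite (↥posRat ⧸ A) := Subgroup.finite_quotient_of_finiteIndex
  -- Hindman's theorem applied to the coloring `chi A` of `ℕ+`
  obtain ⟨C, hC, a, hFS⟩ := Hindman.exists_FS_of_finite_cover
      (Set.range (fun g : ↥posRat ⧸ A => (chi A) ⁻¹' {g}))
      (Set.finite_range _)
      (by
        intro n _
        exact Set.mem_sUnion.mpr ⟨(chi A) ⁻¹' {chi A n}, ⟨chi A n, rfl⟩, rfl⟩)
  obtain ⟨β, rfl⟩ := hC
  have hcol : ∀ z ∈ Hindman.FS a, chi A z = β := fun z hz => hFS hz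
  -- pigeonhole on partial sums of the tail, modulo `(a.head : ℕ)`
  have mpos : 0 < (a.head : ℕ) := a.head.pos
  obtain ⟨v, hv⟩ := Finite.exists_infinite_fiber
    (fun l : ℕ => (⟨((psum a.tail l : ℕ+) : ℕ) % (a.head : ℕ),
      Nat.mod_lt _ mpos⟩ : Fin (a.head : ℕ)))
  have hvinf := Set.infinite_coe_iff.mp hv
  obtain ⟨k, hk⟩ := hvinf.nonempty
  apply Set.infinite_of_forall_exists_gt
  intro B
  obtain ⟨l, hl, hlB⟩ := hvinf.exists_gt (k + (a.head : ℕ) * (B + 1) + 1)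
  have hlt : l = k + 1 + (l - k - 1) := by omega
  -- the block sum U
  set U : ℕ+ := psum (a.tail.drop (k + 1)) (l - k - 1) with hU
  have key : ((psum a.tail l : ℕ+) : ℕ) = ((psum a.tail k : ℕ+) : ℕ) + (U : ℕ) := by
    conv_lhs => rw [hlt]
    exact psum_split a.tail k (l - k - 1)
  -- a.head divides U
  have hmod : ((psum a.tail k : ℕ+) : ℕ) % (a.head : ℕ)
      = ((psum a.tail l : ℕ+) : ℕ) % (a.head : ℕ) := by
    have hk' : _ = v := hk
    have hl' : _ = v := hl
    exact congrArg Fin.val (hk'.trans hl'.symm)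
  have hle : ((psum a.tail k : ℕ+) : ℕ) ≤ ((psum a.tail l : ℕ+) : ℕ) := by omega
  have hdvd : (a.head : ℕ) ∣ (U : ℕ) := by
    have h := (Nat.modEq_iff_dvd' hle).mp hmod
    have heq : ((psum a.tail l : ℕ+) : ℕ) - ((psum a.tail k : ℕ+) : ℕ) = (U : ℕ) := by omega
    rwa [heq] at h
  -- the quotient y
  obtain ⟨y, hmy⟩ := hdvd
  have hUbig : (a.head : ℕ) * (B + 1) ≤ (U : ℕ) := by
    have h1 : (l - k - 1) + 1 ≤ (U : ℕ) := psum_lower _ _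
    have h2 : (a.head : ℕ) * (B + 1) + 1 ≤ l - k - 1 := by omega
    omega
  have hyB : B + 1 ≤ y := by
    have h3 : (a.head : ℕ) * (B + 1) ≤ (a.head : ℕ) * y := by omega
    exact Nat.le_of_mul_le_mul_left h3 mpos
  have ypos : 0 < y := by omega
  -- PNat bookkeeping
  set yp : ℕ+ := ⟨y, ypos⟩ with hyp
  have hypco : ((yp : ℕ+) : ℕ) = y := rfl
  have hUyp : U = a.head * yp := by
    apply PNat.coe_injective
    rw [PNat.mul_coe, hypco]
    exact hmy
  have hxU : a.head + U = a.head * (1 + yp) := by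
    apply PNat.coe_injective
    rw [PNat.add_coe, PNat.mul_coe, PNat.add_coe, PNat.one_coe, hypco]
    rw [Nat.mul_add, Nat.mul_one, ← hmy]
  -- memberships in FS
  have hU_tail : U ∈ Hindman.FS a.tail :=
    Hindman.FS_iter_tail_sub_FS a.tail (k + 1) (psum_mem_FS _ _)
  have hU_FS : U ∈ Hindman.FS a := Hindman.FS.tail a _ hU_tail
  have hxU_FS : a.head + U ∈ Hindman.FS a := Hindman.FS.cons a _ hU_tail
  -- colors
  have hβ1 : chi A a.head = β := hcol _ (Hindman.FS.head a)
  have hβ2 : chi A U = β := hcol _ hU_FS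
  have hβ3 : chi A (a.head + U) = β := hcol _ hxU_FS
  -- conclude y ∈ A and y + 1 ∈ A
  have hchiy : chi A yp = 1 := by
    rw [hUyp, chi_mul, hβ1] at hβ2
    exact (mul_eq_left).mp hβ2
  have hchiy1 : chi A (1 + yp) = 1 := by
    rw [hxU, chi_mul, hβ1] at hβ3
    exact (mul_eq_left).mp hβ3
  refine ⟨y, ⟨ypos, ?_, ?_⟩, by omega⟩
  · exact chi_eq_one_mem hchiy
  · have hmem := chi_eq_one_mem hchiy1
    have hco : ((1 + yp : ℕ+) : ℕ) = y + 1 := by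
      rw [PNat.add_coe, PNat.one_coe, hypco]
      omega
    rwa [hco] at hmem
end
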